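/- Let V and T̂ be finite-dimensional real vector spaces and let ω̂ be a nonvanishing T̂-valued (k+1)-form on V. Then ω̂ admits no isotropic subspace of V of codimension strictly less than k. In particular, if ω̂ is polylagrangian of rank N then N ≥ k. -/

import Mathlib

open Module

/-- `L` is a polylagrangian subspace for the `T`-valued `(k+1)`-form `ω`:
the image of `L` under contraction `v ↦ i_v ω` is exactly the space of `T`-valued
`k`-forms vanishing whenever one argument lies in `L` (the canonical copy of
`(Λ^k L^⊥) ⊗ T` in finite dimension). -/
def IsPolyLag {V T : Type*} [AddCommGroup V] [Module ℝ V] [AddCommGroup T] [Module ℝ T]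
    {k : ℕ} (ω : V [⋀^Fin (k+1)]→ₗ[ℝ] T) (L : Submodule ℝ V) : Prop :=
  ∀ α : V [⋀^Fin k]→ₗ[ℝ] T,
    (∃ v ∈ L, ∀ x : Fin k → V, ω (Fin.cons v x) = α x)
      ↔ ∀ (x : Fin k → V) (i : Fin k), x i ∈ L → α x = 0

/-- If an alternating map vanishes whenever arguments 0 and 1 lie in `L`, it vanishes
whenever any two distinct arguments lie in `L`. -/
lemma iso_any {V T : Type*} [AddCommGroup V] [Module ℝ V] [AddCommGroup T] [Module ℝ T]
    {k : ℕ} (ω : V [⋀^Fin (k+1)]→ₗ[ℝ] T) (L : Submodule ℝ V)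
    (hL : ∀ x : Fin (k+1) → V, x 0 ∈ L → x 1 ∈ L → ω x = 0)
    {i j : Fin (k+1)} (hij : i ≠ j) (x : Fin (k+1) → V)
    (hi : x i ∈ L) (hj : x j ∈ L) : ω x = 0 := by
  have hk : 0 < k := by
    by_contra hk
    have hk0 : k = 0 := by omega
    subst hk0
    exact hij (by omega)
  have h01 : (0 : Fin (k+1)) ≠ 1 := by
    intro h
    have := congrArg Fin.val h
    rw [Fin.val_one', Nat.mod_eq_of_lt (by omega)] at this
    simp at this
  set τ : Equiv.Perm (Fin (k+1)) := Equiv.swap 0 i with hτ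
  have hτ0 : τ 0 = i := Equiv.swap_apply_left 0 i
  set j' : Fin (k+1) := τ.symm j with hj'
  have hj'0 : j' ≠ 0 := by
    intro h
    apply hij
    have h2 : τ j' = j := Equiv.apply_symm_apply τ j
    rw [h, hτ0] at h2
    exact h2
  set σ : Equiv.Perm (Fin (k+1)) := (Equiv.swap 1 j').trans τ with hσ
  have hσ0 : σ 0 = i := by
    simp only [hσ, Equiv.trans_apply]
    rw [Equiv.swap_apply_of_ne_of_ne h01 (Ne.symm hj'0)]
    exact hτ0
  have hσ1 : σ 1 = j := by
    simp only [hσ, Equiv.trans_apply, Equiv.swap_apply_left]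
    exact Equiv.apply_symm_apply τ j
  have h0 : ω (x ∘ σ) = 0 := by
    apply hL
    · simpa [hσ0] using hi
    · simpa [hσ1] using hj
  have hperm := ω.map_perm x σ
  rw [h0] at hperm
  have h3 := congrArg (fun t => (Equiv.Perm.sign σ) • t) hperm.symm
  simpa [smul_smul, Int.units_mul_self] using h3

/-- A nonvanishing vector-valued `(k+1)`-form admits no isotropic subspace of
codimension `< k`; in particular, a polylagrangian form of rank `N` satisfies `N ≥ k`. -/
theorem stmt2 {V T : Type*} [AddCommGroup V] [Module ℝ V] [FiniteDimensional ℝ V]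
    [AddCommGroup T] [Module ℝ T] [FiniteDimensional ℝ T] {k : ℕ}
    (ω : V [⋀^Fin (k+1)]→ₗ[ℝ] T) (hω : ω ≠ 0) :
    (∀ L : Submodule ℝ V,
        (∀ x : Fin (k+1) → V, x 0 ∈ L → x 1 ∈ L → ω x = 0) →
        ¬ Module.finrank ℝ (V ⧸ L) < k)
      ∧ ∀ L : Submodule ℝ V, IsPolyLag ω L → k ≤ Module.finrank ℝ (V ⧸ L) := by
  have main : ∀ L : Submodule ℝ V,
      (∀ x : Fin (k+1) → V, x 0 ∈ L → x 1 ∈ L → ω x = 0) →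
      ¬ Module.finrank ℝ (V ⧸ L) < k := by
    intro L hL hlt
    obtain ⟨W, hW⟩ := Submodule.exists_isCompl L
    have hWrank : finrank ℝ W = finrank ℝ (V ⧸ L) :=
      (Submodule.quotientEquivOfIsCompl L W hW).finrank_eq.symm
    apply hω
    ext x
    have hmem : ∀ i, x i ∈ L ⊔ W := by
      intro i; rw [hW.sup_eq_top]; trivial
    choose l hl w hw hlw using fun i => Submodule.mem_sup.mp (hmem i)
    have hx : x = w + l := by
      funext i
      rw [← hlw i]
      simp [add_comm]
    rw [hx]
    rw [show (ω : V [⋀^Fin (k+1)]→ₗ[ℝ] T) (w + l) = ω.toMultilinearMap (w + l) from rfl]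
    rw [ω.toMultilinearMap.map_add_univ w l]
    apply Finset.sum_eq_zero
    intro s _
    by_cases hcard : k ≤ s.card
    · -- the w-part is too big: linear dependence
      apply AlternatingMap.map_linearDependent
      intro li
      have li2 : LinearIndependent ℝ ((s.piecewise w l) ∘ (fun i : {i // i ∈ s} => (i : Fin (k+1)))) :=
        li.comp _ Subtype.coe_injective
      have li3 : LinearIndependent ℝ (fun i : {i // i ∈ s} => w (i : Fin (k+1))) := by
        convert li2 using 1
        funext i
        exact (Finset.piecewise_eq_of_mem _ _ _ i.2).symm
      have li4 : LinearIndependent ℝ (fun i : {i // i ∈ s} => (⟨w i, hw i⟩ : W)) := by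
        apply LinearIndependent.of_comp W.subtype
        exact li3
      have hle := li4.fintype_card_le_finrank
      rw [Fintype.card_coe, hWrank] at hle
      omega
    · push_neg at hcard
      have h2 : 2 ≤ sᶜ.card := by
        have := Finset.card_compl s
        simp only [Fintype.card_fin] at this
        omega
      obtain ⟨i, hi, j, hj, hij⟩ := Finset.one_lt_card.mp h2
      apply iso_any ω L hL hij
      · rw [Finset.piecewise_eq_of_notMem _ _ _ (Finset.mem_compl.mp hi)]
        exact hl i
      · rw [Finset.piecewise_eq_of_notMem _ _ _ (Finset.mem_compl.mp hj)]
        exact hl j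
  refine ⟨main, ?_⟩
  intro L hPL
  rcases Nat.eq_zero_or_pos k with rfl | hk
  · exact Nat.zero_le _
  by_contra h
  push_neg at h
  apply main L ?_ h
  intro x hx0 hx1
  have hα := (hPL (ω.curryLeft (x 0))).mp ⟨x 0, hx0, fun y => rfl⟩
  have h1 : Fin.tail x ⟨0, hk⟩ ∈ L := by
    have : Fin.tail x ⟨0, hk⟩ = x 1 := by
      simp only [Fin.tail]
      congr 1
      ext
      simp [Fin.val_one', Nat.mod_eq_of_lt (by omega : 1 < k + 1)]
    rw [this]; exact hx1
  have h2 := hα (Fin.tail x) ⟨0, hk⟩ h1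
  have h3 : (ω.curryLeft (x 0)) (Fin.tail x) = ω x := by
    show ω (Fin.cons (x 0) (Fin.tail x)) = ω x
    rw [Fin.cons_self_tail]
  rw [h3] at h2
  exact h2
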